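/- Let x, y ∈ (0,1), n ≥ 1, and set z = (x+y)/2. Then for every convex function f : ℝ → ℝ, ∑_{k=0}^{2n} C(2n,k)·z^k·(1−z)^{2n−k}·f(k) ≤ (1/2)·∑_{k=0}^{2n} C(2n,k)·(x^k·(1−x)^{2n−k} + y^k·(1−y)^{2n−k})·f(k). In other words, B(2n,(x+y)/2) ≤_cx (1/2)(B(2n,x) + B(2n,y)) in the stochastic convex order. -/

import Mathlib

open Finset

noncomputable def bern (m : ℕ) (g : ℕ → ℝ) (p : ℝ) : ℝ :=
  ∑ k ∈ range (m + 1), (m.choose k : ℝ) * p ^ k * (1 - p) ^ (m - k) * g k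

lemma hasDerivAt_bern (m : ℕ) (g : ℕ → ℝ) (p : ℝ) :
    HasDerivAt (bern (m + 1) g)
      (((m : ℝ) + 1) * bern m (fun k => g (k + 1) - g k) p) p := by
  have hterm : ∀ k : ℕ, HasDerivAt
      (fun q : ℝ => ((m + 1).choose k : ℝ) * q ^ k * (1 - q) ^ (m + 1 - k) * g k)
      ((((m + 1).choose k : ℝ) * ((k : ℝ) * p ^ (k - 1)) * (1 - p) ^ (m + 1 - k)
        + ((m + 1).choose k : ℝ) * p ^ k * (((m + 1 - k : ℕ) : ℝ) * (1 - p) ^ (m - k) * (-1)))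
        * g k) p := by
    intro k
    have h1 : HasDerivAt (fun q : ℝ => q ^ k) ((k : ℝ) * p ^ (k - 1)) p := hasDerivAt_pow k p
    have h2 : HasDerivAt (fun q : ℝ => (1 - q) ^ (m + 1 - k))
        (((m + 1 - k : ℕ) : ℝ) * (1 - p) ^ (m - k) * (-1)) p := by
      have hsub : HasDerivAt (fun q : ℝ => 1 - q) (-1) p := by
        simpa using (hasDerivAt_const p (1:ℝ)).fun_sub (hasDerivAt_id p)
      have h := (hasDerivAt_pow (m + 1 - k) (1 - p)).comp p hsub
      have he : m + 1 - k - 1 = m - k := by omega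
      simpa [he, mul_comm, mul_assoc, mul_left_comm, Function.comp_def] using h
    exact ((h1.const_mul _).mul h2).mul_const _
  have hsum := HasDerivAt.fun_sum (fun k (_ : k ∈ range (m + 1 + 1)) => hterm k)
  have heq : (∑ k ∈ range (m + 1 + 1),
      ((((m + 1).choose k : ℝ) * ((k : ℝ) * p ^ (k - 1)) * (1 - p) ^ (m + 1 - k)
        + ((m + 1).choose k : ℝ) * p ^ k * (((m + 1 - k : ℕ) : ℝ) * (1 - p) ^ (m - k) * (-1)))
        * g k))
      = ((m : ℝ) + 1) * bern m (fun k => g (k + 1) - g k) p := by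
    have split : ∀ k ∈ range (m + 1 + 1),
        (((m + 1).choose k : ℝ) * ((k : ℝ) * p ^ (k - 1)) * (1 - p) ^ (m + 1 - k)
          + ((m + 1).choose k : ℝ) * p ^ k * (((m + 1 - k : ℕ) : ℝ) * (1 - p) ^ (m - k) * (-1)))
          * g k
        = ((m + 1).choose k : ℝ) * (k : ℝ) * p ^ (k - 1) * (1 - p) ^ (m + 1 - k) * g k
          - ((m + 1).choose k : ℝ) * ((m + 1 - k : ℕ) : ℝ) * p ^ k * (1 - p) ^ (m - k) * g k := by
      intro k _; ring
    rw [Finset.sum_congr rfl split, Finset.sum_sub_distrib]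
    have hA : ∑ k ∈ range (m + 1 + 1),
        ((m + 1).choose k : ℝ) * (k : ℝ) * p ^ (k - 1) * (1 - p) ^ (m + 1 - k) * g k
        = ∑ k ∈ range (m + 1),
          ((m : ℝ) + 1) * ((m.choose k : ℝ) * p ^ k * (1 - p) ^ (m - k) * g (k + 1)) := by
      rw [Finset.sum_range_succ']
      simp only [Nat.cast_zero, mul_zero, zero_mul, add_zero]
      refine Finset.sum_congr rfl fun k hk => ?_
      have hc : ((m : ℝ) + 1) * (m.choose k : ℝ) = ((m + 1).choose (k + 1) : ℝ) * ((k : ℝ) + 1) := by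
        exact_mod_cast Nat.add_one_mul_choose_eq m k
      have he1 : k + 1 - 1 = k := rfl
      have he2 : m + 1 - (k + 1) = m - k := by omega
      rw [he1, he2]
      push_cast
      linear_combination (-(p ^ k * (1 - p) ^ (m - k) * g (k + 1))) * hc
    have hB : ∑ k ∈ range (m + 1 + 1),
        ((m + 1).choose k : ℝ) * ((m + 1 - k : ℕ) : ℝ) * p ^ k * (1 - p) ^ (m - k) * g k
        = ∑ k ∈ range (m + 1),
          ((m : ℝ) + 1) * ((m.choose k : ℝ) * p ^ k * (1 - p) ^ (m - k) * g k) := by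
      rw [Finset.sum_range_succ]
      simp only [Nat.sub_self, Nat.cast_zero, mul_zero, zero_mul, add_zero]
      refine Finset.sum_congr rfl fun k hk => ?_
      have hk' : k ≤ m := by simpa [Nat.lt_succ_iff] using hk
      have hc : ((m + 1).choose k : ℝ) * ((m + 1 - k : ℕ) : ℝ) = ((m : ℝ) + 1) * (m.choose k : ℝ) := by
        have h2 : ((m + 1).choose k * (m + 1 - k) : ℕ) = ((m + 1) * m.choose k : ℕ) := by
          rw [← Nat.choose_mul_succ_eq m k]; ring
        exact_mod_cast h2
      linear_combination (p ^ k * (1 - p) ^ (m - k) * g k) * hc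
    rw [hA, hB, bern, Finset.mul_sum, ← Finset.sum_sub_distrib]
    exact Finset.sum_congr rfl fun k _ => by ring
  rw [← heq]
  exact hsum

/-- Proposition 2: `B(2n,(x+y)/2) ≤_cx (1/2)(B(2n,x)+B(2n,y))`. -/
theorem binomial_midpoint_cx (n : ℕ) (hn : 1 ≤ n) (x y : ℝ)
    (hx : x ∈ Set.Ioo (0:ℝ) 1) (hy : y ∈ Set.Ioo (0:ℝ) 1)
    (f : ℝ → ℝ) (hf : ConvexOn ℝ Set.univ f) :
    ∑ k ∈ range (2 * n + 1),
        ((2 * n).choose k : ℝ) * ((x + y) / 2) ^ k * (1 - (x + y) / 2) ^ (2 * n - k) * f k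
      ≤ (1 / 2) * ∑ k ∈ range (2 * n + 1),
        ((2 * n).choose k : ℝ) *
          (x ^ k * (1 - x) ^ (2 * n - k) + y ^ k * (1 - y) ^ (2 * n - k)) * f k := by
  obtain ⟨m, hm⟩ : ∃ m, 2 * n = m + 1 + 1 := ⟨2 * n - 2, by omega⟩
  rw [hm]
  set g : ℕ → ℝ := fun k => f k with hg
  set g1 : ℕ → ℝ := fun k => g (k + 1) - g k with hg1
  set g2 : ℕ → ℝ := fun k => g1 (k + 1) - g1 k with hg2
  have hg2nn : ∀ k : ℕ, 0 ≤ g2 k := by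
    intro k
    have hcx := hf.2 (Set.mem_univ ((k : ℝ))) (Set.mem_univ ((k : ℝ) + 2))
      (by norm_num : (0:ℝ) ≤ 1/2) (by norm_num : (0:ℝ) ≤ 1/2) (by norm_num : (1/2:ℝ) + 1/2 = 1)
    simp only [smul_eq_mul] at hcx
    rw [show (1/2:ℝ) * (k : ℝ) + (1/2) * ((k : ℝ) + 2) = (k : ℝ) + 1 by ring] at hcx
    have e1 : g (k + 1) = f ((k : ℝ) + 1) := by simp [hg]
    have e2 : g (k + 1 + 1) = f ((k : ℝ) + 2) := by
      simp only [hg]; norm_num; ring_nf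
    have e0 : g k = f (k : ℝ) := rfl
    simp only [hg2, hg1]
    rw [e1, e2, e0]
    linarith
  have hd1 : deriv (bern (m + 1 + 1) g)
      = fun q => (((m + 1 : ℕ) : ℝ) + 1) * bern (m + 1) (fun k => g (k + 1) - g k) q :=
    funext fun q => (hasDerivAt_bern (m + 1) g q).deriv
  have key : ConvexOn ℝ (Set.Icc (0:ℝ) 1) (bern (m + 1 + 1) g) := by
    apply convexOn_of_deriv2_nonneg' (convex_Icc 0 1)
    · intro p _
      exact (hasDerivAt_bern (m + 1) g p).differentiableAt.differentiableWithinAt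
    · rw [hd1]
      intro p _
      exact (((hasDerivAt_bern m (fun k => g (k + 1) - g k) p).const_mul
        _).differentiableAt).differentiableWithinAt
    · intro p hp
      have hit : deriv^[2] (bern (m + 1 + 1) g) p = deriv (deriv (bern (m + 1 + 1) g)) p := rfl
      rw [hit, hd1]
      have hD : HasDerivAt
          (fun q => (((m + 1 : ℕ) : ℝ) + 1) * bern (m + 1) (fun k => g (k + 1) - g k) q)
          ((((m + 1 : ℕ) : ℝ) + 1) * (((m : ℝ) + 1) *
            bern m (fun k => (g (k + 1 + 1) - g (k + 1)) - (g (k + 1) - g k)) p)) p :=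
        (hasDerivAt_bern m (fun k => g (k + 1) - g k) p).const_mul _
      rw [hD.deriv]
      have hb : 0 ≤ bern m (fun k => (g (k + 1 + 1) - g (k + 1)) - (g (k + 1) - g k)) p := by
        apply Finset.sum_nonneg
        intro k hk
        have h1 : (0:ℝ) ≤ (m.choose k : ℝ) := by positivity
        have h2 : (0:ℝ) ≤ p ^ k := pow_nonneg hp.1 k
        have h3 : (0:ℝ) ≤ (1 - p) ^ (m - k) := pow_nonneg (by linarith [hp.2]) _
        have h4 : (0:ℝ) ≤ (g (k + 1 + 1) - g (k + 1)) - (g (k + 1) - g k) := hg2nn k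
        positivity
      have hc1 : (0:ℝ) ≤ ((m + 1 : ℕ) : ℝ) + 1 := by positivity
      have hc2 : (0:ℝ) ≤ (m : ℝ) + 1 := by positivity
      exact mul_nonneg hc1 (mul_nonneg hc2 hb)
  have hxI : x ∈ Set.Icc (0:ℝ) 1 := ⟨le_of_lt hx.1, le_of_lt hx.2⟩
  have hyI : y ∈ Set.Icc (0:ℝ) 1 := ⟨le_of_lt hy.1, le_of_lt hy.2⟩
  have h2 := key.2 hxI hyI (by norm_num : (0:ℝ) ≤ 1/2) (by norm_num : (0:ℝ) ≤ 1/2)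
    (by norm_num : (1/2:ℝ) + 1/2 = 1)
  simp only [smul_eq_mul] at h2
  rw [show (1/2:ℝ) * x + (1/2) * y = (x + y) / 2 by ring] at h2
  have hRHS : ∑ k ∈ range (m + 1 + 1 + 1),
      ((m + 1 + 1).choose k : ℝ) *
        (x ^ k * (1 - x) ^ (m + 1 + 1 - k) + y ^ k * (1 - y) ^ (m + 1 + 1 - k)) * f k
      = bern (m + 1 + 1) g x + bern (m + 1 + 1) g y := by
    rw [bern, bern, ← Finset.sum_add_distrib]
    exact Finset.sum_congr rfl fun k _ => by simp only [hg]; ring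
  calc ∑ k ∈ range (m + 1 + 1 + 1),
        ((m + 1 + 1).choose k : ℝ) * ((x + y) / 2) ^ k * (1 - (x + y) / 2) ^ (m + 1 + 1 - k) * f k
      = bern (m + 1 + 1) g ((x + y) / 2) := rfl
    _ ≤ 1/2 * bern (m + 1 + 1) g x + 1/2 * bern (m + 1 + 1) g y := h2
    _ = (1/2) * ∑ k ∈ range (m + 1 + 1 + 1),
        ((m + 1 + 1).choose k : ℝ) *
          (x ^ k * (1 - x) ^ (m + 1 + 1 - k) + y ^ k * (1 - y) ^ (m + 1 + 1 - k)) * f k := by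
      rw [hRHS]; ring
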